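/- Let h be a hyperbolic metric on a surface M and Ḣ^s, Ḣ^t trace-free divergence-free symmetric endomorphisms (variations) at h. Then at each point, with X₁, X₂ an oriented orthonormal frame, Tr(R²)(∂_s, ∂_t, X₁, X₂) = −Tr(J Ḣ^s Ḣ^t), where R is the vertical curvature with R_{∂_s∂_t} = −(1/4)[Ḣ^s, Ḣ^t], ⟨R_{X₁X₂}X₂,X₁⟩ = −1, R_{∂_t X_j}=0, and J is the complex structure. -/
import Mathlib


open Matrix

/-!
Pointwise computation on the tangent plane `T_pM = ℝ²` of an oriented hyperbolic
surface, in an oriented orthonormal frame `X₁ = e₀, X₂ = e₁`.  `J = !![0,-1;1,0]`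
is the complex structure (rotation by +90°), `Hs, Ht` are the symmetric trace-free
endomorphisms `Ḣ^s, Ḣ^t` of transverse-traceless variations, `Rst` is the curvature
component `R_{∂_s,∂_t} = −(1/4)[Ḣ^s,Ḣ^t]`, and `RX` is the fiber curvature
`R_{X₁,X₂}`, which is skew-symmetric with `⟨R_{X₁X₂}X₂, X₁⟩ = −1` (hyperbolic
fibers) — together with `R_{∂_t X_j} = 0` these are all the curvature components.
Then `Tr(R²)(∂_s,∂_t,X₁,X₂) = 2 Tr(R_{∂_s∂_t} R_{X₁X₂}) = −Tr(J Ḣ^s Ḣ^t)`.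
-/
theorem stmt_16
    (Hs Ht Rst RX : Matrix (Fin 2) (Fin 2) ℝ)
    (hHs_sym : Hsᵀ = Hs) (hHt_sym : Htᵀ = Ht)
    (hHs_tr : Hs.trace = 0) (hHt_tr : Ht.trace = 0)
    (hRst : Rst = (-(1 / 4 : ℝ)) • (Hs * Ht - Ht * Hs))
    (hRX_anti : RXᵀ = -RX)
    (hRX : (RX *ᵥ (Pi.single 1 1 : Fin 2 → ℝ)) ⬝ᵥ (Pi.single 0 1 : Fin 2 → ℝ) = -1) :
    2 * (Rst * RX).trace = -(!![0, -1; 1, 0] * Hs * Ht).trace := by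
  have e01 : RX 0 1 = -1 := by
    simpa [Matrix.mulVec, dotProduct, Fin.sum_univ_two] using hRX
  have e10 : RX 1 0 = 1 := by
    have := congrFun (congrFun hRX_anti 0) 1
    simp [Matrix.transpose_apply, e01] at this
    linarith
  have hs10 : Hs 1 0 = Hs 0 1 := congrFun (congrFun hHs_sym 0) 1
  have ht10 : Ht 1 0 = Ht 0 1 := congrFun (congrFun hHt_sym 0) 1
  have hs11 : Hs 1 1 = -Hs 0 0 := by
    have := hHs_tr; simp [Matrix.trace, Fin.sum_univ_two] at this; linarith
  have ht11 : Ht 1 1 = -Ht 0 0 := by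
    have := hHt_tr; simp [Matrix.trace, Fin.sum_univ_two] at this; linarith
  simp [hRst, Matrix.trace, Fin.sum_univ_two, Matrix.mul_apply, e01, e10,
    hs10, ht10, hs11, ht11, Matrix.vecMul, dotProduct]
  ring
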